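/- (Upper bound on the looptree pseudo-distance.) If 0 ≤ s < t ≤ 1, then d(s,t) ≤ f(s) + f(t−) − 2·I_s^t. -/

import Mathlib

open Set Filter

/-- The infimum `I_s^t` of `f` over the interval `[s, t]`. -/
noncomputable def infIcc (f : ℝ → ℝ) (s t : ℝ) : ℝ := sInf (f '' Set.Icc s t)

/-- The genealogical relation `s ≼ t` associated with the excursion-type function `f`,
where `fl` is the left-limit function of `f` (with the convention `fl 0 = 0`):
`s ≼ t ↔ s ≤ t ∧ f(s-) ≤ I_s^t`. -/
def Prec (f fl : ℝ → ℝ) (s t : ℝ) : Prop := s ≤ t ∧ fl s ≤ infIcc f s t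

/-- The jump `Δ_t = f(t) - f(t-)` of `f` at `t` (with the convention `fl 0 = 0`
this gives `Δ_0 = 0` for `f 0 = 0`). -/
def jump (f fl : ℝ → ℝ) (t : ℝ) : ℝ := f t - fl t

/-- The position `x_s^t = I_s^t - f(s-)` of the ancestral line of `t` in the loop at `s`. -/
noncomputable def xpos (f fl : ℝ → ℝ) (s t : ℝ) : ℝ := infIcc f s t - fl s

/-- Distance on the cycle of length `D`: `δ_D(a,b) = min (|a-b|, D - |a-b|)`. -/
def cycleDist (D a b : ℝ) : ℝ := min |a - b| (D - |a - b|)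

/-- `d₀(s,t) = ∑_{s ≺ r ≼ t} δ_{Δ_r}(0, x_r^t)`. -/
noncomputable def dZero (f fl : ℝ → ℝ) (s t : ℝ) : ℝ :=
  ∑' r : {r : ℝ // Prec f fl s r ∧ s ≠ r ∧ Prec f fl r t},
    cycleDist (jump f fl r.1) 0 (xpos f fl r.1 t)

/-- The most recent common ancestor `s ∧ t` of `s` and `t`: the greatest common
`≼`-lower bound of `s` and `t` in `[0,1]`, realized as the supremum of the set of
common lower bounds. -/
noncomputable def mca (f fl : ℝ → ℝ) (s t : ℝ) : ℝ :=
  sSup {r : ℝ | r ∈ Set.Icc (0:ℝ) 1 ∧ Prec f fl r s ∧ Prec f fl r t}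

/-- The looptree pseudo-distance
`d(s,t) = δ_{Δ_{s∧t}}(x_{s∧t}^s, x_{s∧t}^t) + d₀(s∧t, s) + d₀(s∧t, t)`. -/
noncomputable def looptreeDist (f fl : ℝ → ℝ) (s t : ℝ) : ℝ :=
  cycleDist (jump f fl (mca f fl s t)) (xpos f fl (mca f fl s t) s) (xpos f fl (mca f fl s t) t)
    + dZero f fl (mca f fl s t) s + dZero f fl (mca f fl s t) t

namespace LooptreeAux

variable {f fl : ℝ → ℝ}

lemma bddBelow_image (hf : ∀ t ∈ Set.Icc (0:ℝ) 1, 0 ≤ f t) {a b : ℝ} (ha : 0 ≤ a) (hb : b ≤ 1) :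
    BddBelow (f '' Set.Icc a b) := by
  refine ⟨0, ?_⟩
  rintro y ⟨x, hx, rfl⟩
  exact hf x ⟨le_trans ha hx.1, le_trans hx.2 hb⟩

lemma infIcc_le (hf : ∀ t ∈ Set.Icc (0:ℝ) 1, 0 ≤ f t) {a b x : ℝ} (ha : 0 ≤ a) (hb : b ≤ 1)
    (hx : x ∈ Set.Icc a b) : infIcc f a b ≤ f x :=
  csInf_le (bddBelow_image hf ha hb) ⟨x, hx, rfl⟩

lemma le_infIcc {a b C : ℝ} (hab : a ≤ b) (h : ∀ x ∈ Set.Icc a b, C ≤ f x) :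
    C ≤ infIcc f a b := by
  refine le_csInf ((Set.nonempty_Icc.2 hab).image f) ?_
  rintro y ⟨x, hx, rfl⟩
  exact h x hx

lemma infIcc_mono (hf : ∀ t ∈ Set.Icc (0:ℝ) 1, 0 ≤ f t) {a a' b b' : ℝ}
    (ha : 0 ≤ a) (hb : b ≤ 1) (h1 : a ≤ a') (h2 : b' ≤ b) (h : a' ≤ b') :
    infIcc f a b ≤ infIcc f a' b' :=
  le_infIcc h (fun x hx => infIcc_le hf ha hb ⟨h1.trans hx.1, hx.2.trans h2⟩)

lemma infIcc_self {b : ℝ} : infIcc f b b = f b := by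
  rw [infIcc, Set.Icc_self, Set.image_singleton, csInf_singleton]

/-- L1 : the left limit at `c ∈ (a, b]` dominates the inf over `[a,b]`. -/
lemma infIcc_le_leftLim
    (hf_left : ∀ t ∈ Set.Ioc (0:ℝ) 1, Filter.Tendsto f (nhdsWithin t (Set.Iio t)) (nhds (fl t)))
    (hf_nonneg : ∀ t ∈ Set.Icc (0:ℝ) 1, 0 ≤ f t)
    {a b c : ℝ} (ha : 0 ≤ a) (hac : a < c) (hcb : c ≤ b) (hb : b ≤ 1) :
    infIcc f a b ≤ fl c := by
  refine ge_of_tendsto (hf_left c ⟨lt_of_le_of_lt ha hac, hcb.trans hb⟩) ?_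
  filter_upwards [Ioo_mem_nhdsLT_of_mem (⟨hac, le_refl c⟩ : c ∈ Set.Ioc a c)] with x hx
  exact infIcc_le hf_nonneg ha hb ⟨hx.1.le, hx.2.le.trans hcb⟩

/-- H1 : if there are points just left of `m` where `f ≤ C`, then `fl m ≤ C`. -/
lemma leftLim_le
    (hf_left : ∀ t ∈ Set.Ioc (0:ℝ) 1, Filter.Tendsto f (nhdsWithin t (Set.Iio t)) (nhds (fl t)))
    {m C : ℝ} (hm0 : 0 < m) (hm1 : m ≤ 1)
    (h : ∀ δ > (0:ℝ), ∃ x, m - δ < x ∧ x < m ∧ f x ≤ C) : fl m ≤ C := by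
  by_contra hlt
  push_neg at hlt
  have hev : ∀ᶠ x in nhdsWithin m (Set.Iio m), C < f x :=
    (hf_left m ⟨hm0, hm1⟩).eventually (eventually_gt_nhds hlt)
  obtain ⟨a, ham, hsub⟩ := mem_nhdsLT_iff_exists_Ioo_subset.1 hev
  obtain ⟨x, hx1, hx2, hx3⟩ := h (m - a) (by simp only [Set.mem_Iio] at ham; linarith)
  exact absurd hx3 (not_le.2 (hsub ⟨by linarith, hx2⟩))

/-- Telescoping chain bound. -/
lemma chain_sum
    (hf_left : ∀ t ∈ Set.Ioc (0:ℝ) 1, Filter.Tendsto f (nhdsWithin t (Set.Iio t)) (nhds (fl t)))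
    (hf_nonneg : ∀ t ∈ Set.Icc (0:ℝ) 1, 0 ≤ f t)
    {b : ℝ} (hb : b ≤ 1) :
    ∀ (n : ℕ) (a : ℝ) (F : Finset ℝ), F.card = n → 0 ≤ a → a < b →
      (∀ r ∈ F, a < r ∧ r < b) →
      ∑ r ∈ F, (infIcc f r b - fl r) ≤ fl b - infIcc f a b := by
  intro n
  induction n with
  | zero =>
    intro a F hF ha hab hmem
    rw [Finset.card_eq_zero.1 hF]
    simp only [Finset.sum_empty]
    linarith [infIcc_le_leftLim hf_left hf_nonneg ha hab (le_refl b) hb]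
  | succ n ih =>
    intro a F hF ha hab hmem
    have hne : F.Nonempty := Finset.card_pos.1 (by omega)
    set r0 := F.min' hne with hr0
    have hr0F : r0 ∈ F := F.min'_mem hne
    have h0 := hmem r0 hr0F
    rw [← Finset.sum_erase_add F _ hr0F]
    have hrest : ∑ r ∈ F.erase r0, (infIcc f r b - fl r) ≤ fl b - infIcc f r0 b := by
      refine ih r0 (F.erase r0) ?_ (le_of_lt (lt_of_le_of_lt ha h0.1)) h0.2 ?_
      · rw [Finset.card_erase_of_mem hr0F, hF]; omega
      · intro r hr
        exact ⟨lt_of_le_of_ne (F.min'_le r (Finset.mem_of_mem_erase hr))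
            (Ne.symm (Finset.ne_of_mem_erase hr)), (hmem r (Finset.mem_of_mem_erase hr)).2⟩
    have hfl : infIcc f a b ≤ fl r0 :=
      infIcc_le_leftLim hf_left hf_nonneg ha h0.1 h0.2.le hb
    linarith

/-- L6 : bound on `d₀(a,b)`. -/
lemma dZero_le
    (hf_left : ∀ t ∈ Set.Ioc (0:ℝ) 1, Filter.Tendsto f (nhdsWithin t (Set.Iio t)) (nhds (fl t)))
    (hf_nonneg : ∀ t ∈ Set.Icc (0:ℝ) 1, 0 ≤ f t)
    (hf_jump : ∀ t ∈ Set.Icc (0:ℝ) 1, fl t ≤ f t)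
    {a b : ℝ} (ha : 0 ≤ a) (hab : a < b) (hb : b ≤ 1) :
    dZero f fl a b ≤ fl b - infIcc f a b := by
  have hbase : infIcc f a b ≤ fl b :=
    infIcc_le_leftLim hf_left hf_nonneg ha hab (le_refl b) hb
  refine tsum_le_of_sum_le' (by linarith) ?_
  intro u
  have hterm : ∀ i : {r : ℝ // Prec f fl a r ∧ a ≠ r ∧ Prec f fl r b},
      cycleDist (jump f fl i.1) 0 (xpos f fl i.1 b) ≤
        if i.1 < b then infIcc f i.1 b - fl i.1 else 0 := by
    rintro ⟨r, har, hne, hrb⟩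
    have hr0 : 0 ≤ r := ha.trans har.1
    have hr1 : r ≤ 1 := hrb.1.trans hb
    have hx0 : 0 ≤ xpos f fl r b := sub_nonneg.2 hrb.2
    have habs : |0 - xpos f fl r b| = xpos f fl r b := by
      rw [zero_sub, abs_neg, abs_of_nonneg hx0]
    simp only [cycleDist, habs]
    by_cases hlt : r < b
    · simp only [if_pos hlt]
      exact min_le_left _ _
    · simp only [if_neg hlt]
      have hrb' : r = b := le_antisymm hrb.1 (not_lt.1 hlt)
      subst hrb'
      refine le_trans (min_le_right _ _) ?_
      simp only [xpos, jump, infIcc_self]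
      linarith
  calc ∑ i ∈ u, cycleDist (jump f fl i.1) 0 (xpos f fl i.1 b)
      ≤ ∑ i ∈ u, (if i.1 < b then infIcc f i.1 b - fl i.1 else 0) :=
        Finset.sum_le_sum (fun i _ => hterm i)
    _ = ∑ r ∈ u.image Subtype.val, (if r < b then infIcc f r b - fl r else 0) :=
        by rw [Finset.sum_image (fun x _ y _ h => Subtype.val_injective h)]
    _ = ∑ r ∈ (u.image Subtype.val).filter (· < b), (infIcc f r b - fl r) :=
        (Finset.sum_filter _ _).symm
    _ ≤ fl b - infIcc f a b := by
        refine chain_sum hf_left hf_nonneg hb _ a _ rfl ha hab ?_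
        intro r hr
        rw [Finset.mem_filter] at hr
        obtain ⟨i, _hiu, rfl⟩ := Finset.mem_image.1 hr.1
        exact ⟨lt_of_le_of_ne i.2.1.1 i.2.2.1, hr.2⟩

end LooptreeAux

/-- upper bound on the looptree pseudo-distance: if 0 ≤ s < t ≤ 1 then
d(s,t) ≤ f(s) + f(t-) - 2 I_s^t. -/
theorem looptreeDist_upper_bound (f fl : ℝ → ℝ)
    (hf_right : ∀ t ∈ Set.Ico (0:ℝ) 1, Filter.Tendsto f (nhdsWithin t (Set.Ici t)) (nhds (f t)))
    (hf_left : ∀ t ∈ Set.Ioc (0:ℝ) 1, Filter.Tendsto f (nhdsWithin t (Set.Iio t)) (nhds (fl t)))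
    (hfl0 : fl 0 = 0)
    (hf_nonneg : ∀ t ∈ Set.Icc (0:ℝ) 1, 0 ≤ f t)
    (hf_jump : ∀ t ∈ Set.Icc (0:ℝ) 1, fl t ≤ f t)
    (hf0 : f 0 = 0) (hf1 : f 1 = 0)
    (s t : ℝ) (hs : s ∈ Set.Icc (0:ℝ) 1) (ht : t ∈ Set.Icc (0:ℝ) 1) (hst : s < t) :
    looptreeDist f fl s t ≤ f s + fl t - 2 * infIcc f s t := by
  open LooptreeAux in
  obtain ⟨hs0, hs1⟩ := hs
  obtain ⟨ht0, ht1⟩ := ht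
  unfold looptreeDist
  set A := {r : ℝ | r ∈ Set.Icc (0:ℝ) 1 ∧ Prec f fl r s ∧ Prec f fl r t} with hA
  set m := mca f fl s t with hm
  have hmss : m = sSup A := rfl
  have h0A : (0:ℝ) ∈ A := by
    refine ⟨⟨le_refl 0, zero_le_one⟩, ⟨hs0, ?_⟩, ⟨ht0, ?_⟩⟩
    · rw [hfl0]
      exact LooptreeAux.le_infIcc hs0 (fun x hx => hf_nonneg x ⟨hx.1, hx.2.trans hs1⟩)
    · rw [hfl0]
      exact LooptreeAux.le_infIcc ht0 (fun x hx => hf_nonneg x ⟨hx.1, hx.2.trans ht1⟩)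
  have hAne : A.Nonempty := ⟨0, h0A⟩
  have hAbdd : BddAbove A := ⟨1, fun r hr => hr.1.2⟩
  have hm0 : 0 ≤ m := hmss ▸ le_csSup hAbdd h0A
  have hms : m ≤ s := hmss ▸ csSup_le hAne (fun r hr => hr.2.1.1)
  have hm1 : m ≤ 1 := hms.trans hs1
  have hmt : m < t := lt_of_le_of_lt hms hst
  -- L3 : m is a common lower bound
  have hPrec_mt : fl m ≤ infIcc f m t := by
    by_cases hmem : m ∈ A
    · exact hmem.2.2.2
    · have hm0' : 0 < m := by
        rcases eq_or_lt_of_le hm0 with h | h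
        · exact absurd (h ▸ h0A) hmem
        · exact h
      have hstep : ∀ ε > (0:ℝ), fl m ≤ infIcc f m t + ε := by
        intro ε hε
        refine LooptreeAux.leftLim_le hf_left hm0' hm1 (fun δ hδ => ?_)
        have hδ' : 0 < min δ m := lt_min hδ hm0'
        obtain ⟨r, hrA, hr⟩ := exists_lt_of_lt_csSup hAne
          (show m - min δ m < sSup A by rw [← hmss]; linarith)
        have hrm : r ≤ m := hmss ▸ le_csSup hAbdd hrA
        have hrm' : r < m := lt_of_le_of_ne hrm (fun h => hmem (h ▸ hrA))
        have hr0 : 0 < r := lt_of_le_of_lt (by linarith [min_le_right δ m]) hr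
        have hflr : fl r ≤ infIcc f m t :=
          le_trans hrA.2.2.2 (LooptreeAux.infIcc_mono hf_nonneg hr0.le ht1 hrm (le_refl t) hmt.le)
        have hev1 : ∀ᶠ x in nhdsWithin r (Set.Iio r), f x < fl r + ε :=
          (hf_left r ⟨hr0, hrm.trans hm1⟩).eventually (eventually_lt_nhds (by linarith))
        have hev2 : ∀ᶠ x in nhdsWithin r (Set.Iio r), x ∈ Set.Ioo (m - δ) r :=
          eventually_of_mem (Ioo_mem_nhdsLT_of_mem
            ⟨by linarith [min_le_left δ m], le_refl r⟩) (fun x hx => hx)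
        obtain ⟨x, hx1, hx2⟩ := (hev1.and hev2).exists
        exact ⟨x, hx2.1, lt_trans hx2.2 hrm', by linarith⟩
      by_contra hc
      push_neg at hc
      have := hstep ((fl m - infIcc f m t) / 2) (by linarith)
      linarith
  have hPrec_ms : fl m ≤ infIcc f m s :=
    hPrec_mt.trans (LooptreeAux.infIcc_mono hf_nonneg hm0 ht1 (le_refl m) hst.le hms)
  -- L4 : key claim
  have key : ∀ u, m < u → u ≤ s → infIcc f s t ≤ f u := by
    intro u hmu hus
    by_contra hfu
    push_neg at hfu
    set B := {x : ℝ | x ∈ Set.Icc u s ∧ f x < infIcc f s t} with hB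
    have huB : u ∈ B := ⟨⟨le_refl u, hus⟩, hfu⟩
    have hBne : B.Nonempty := ⟨u, huB⟩
    have hBbdd : BddAbove B := ⟨s, fun x hx => hx.1.2⟩
    set v := sSup B with hv
    have huv : u ≤ v := le_csSup hBbdd huB
    have hvs : v ≤ s := csSup_le hBne (fun x hx => hx.1.2)
    have hv0 : 0 < v := lt_of_le_of_lt hm0 (lt_of_lt_of_le hmu huv)
    have hv1 : v ≤ 1 := hvs.trans hs1
    have hIv : ∀ x, v < x → x ≤ s → infIcc f s t ≤ f x := by
      intro x hvx hxs
      by_contra hc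
      push_neg at hc
      have hxB : x ∈ B := ⟨⟨huv.trans hvx.le, hxs⟩, hc⟩
      exact absurd (le_csSup hBbdd hxB) (not_le.2 hvx)
    have hflv' : fl v ≤ f v := hf_jump v ⟨hv0.le, hv1⟩
    have hflv : fl v ≤ infIcc f s t := by
      rcases lt_or_ge (f v) (infIcc f s t) with hfv | hfv
      · exact hflv'.trans hfv.le
      · have hvB : v ∉ B := fun h => absurd h.2 (not_lt.2 hfv)
        refine LooptreeAux.leftLim_le hf_left hv0 hv1 (fun δ hδ => ?_)
        obtain ⟨x, hxB, hx⟩ := exists_lt_of_lt_csSup hBne (show v - δ < sSup B by linarith)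
        have hxv : x ≤ v := le_csSup hBbdd hxB
        have hxv' : x < v := lt_of_le_of_ne hxv (fun h => hvB (h ▸ hxB))
        exact ⟨x, hx, hxv', hxB.2.le⟩
    have hvA : v ∈ A := by
      refine ⟨⟨hv0.le, hv1⟩, ⟨hvs, ?_⟩, ⟨hvs.trans hst.le, ?_⟩⟩
      · refine LooptreeAux.le_infIcc hvs (fun x hx => ?_)
        rcases eq_or_lt_of_le hx.1 with h | h
        · exact le_of_le_of_eq hflv' (congrArg f h)
        · exact hflv.trans (hIv x h hx.2)
      · refine LooptreeAux.le_infIcc (hvs.trans hst.le) (fun x hx => ?_)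
        rcases eq_or_lt_of_le hx.1 with h | h
        · exact le_of_le_of_eq hflv' (congrArg f h)
        · rcases le_or_gt x s with hxs | hxs
          · exact hflv.trans (hIv x h hxs)
          · exact hflv.trans (LooptreeAux.infIcc_le hf_nonneg hs0 ht1 ⟨hxs.le, hx.2⟩)
    have : v ≤ m := hmss ▸ le_csSup hAbdd hvA
    linarith
  have hIst_fs : infIcc f s t ≤ f s := LooptreeAux.infIcc_le hf_nonneg hs0 ht1 ⟨le_refl s, hst.le⟩
  have hfls : fl s ≤ f s := hf_jump s ⟨hs0, hs1⟩
  rcases eq_or_lt_of_le hms with hcase | hcase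
  · -- m = s
    have hempty : dZero f fl m s = 0 := by
      rw [hcase]
      refine (tsum_congr ?_).trans tsum_zero
      rintro ⟨r, h1, h2, h3⟩
      exact absurd (le_antisymm h1.1 h3.1) h2
    have hcyc : cycleDist (jump f fl m) (xpos f fl m s) (xpos f fl m t) ≤ f s - infIcc f s t := by
      rw [hcase]
      unfold cycleDist xpos jump
      rw [LooptreeAux.infIcc_self]
      rw [show f s - fl s - (infIcc f s t - fl s) = f s - infIcc f s t by ring,
        abs_of_nonneg (by linarith)]
      exact min_le_left _ _
    have hd0t : dZero f fl m t ≤ fl t - infIcc f m t := by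
      rw [hcase]
      exact LooptreeAux.dZero_le hf_left hf_nonneg hf_jump hs0 hst ht1
    have hImt : infIcc f m t = infIcc f s t := by rw [hcase]
    linarith [hempty, hcyc, hd0t, hImt]
  · -- m < s
    have hfm : infIcc f s t ≤ f m := by
      by_contra hc
      push_neg at hc
      have htd : Filter.Tendsto f (nhdsWithin m (Set.Ioi m)) (nhds (f m)) :=
        (hf_right m ⟨hm0, lt_of_le_of_lt hms (lt_of_lt_of_le hst ht1)⟩).mono_left
          (nhdsWithin_mono m Set.Ioi_subset_Ici_self)
      have hev : ∀ᶠ x in nhdsWithin m (Set.Ioi m), f x < infIcc f s t :=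
        htd.eventually (eventually_lt_nhds hc)
      have hev2 : ∀ᶠ x in nhdsWithin m (Set.Ioi m), x ∈ Set.Ioc m s :=
        eventually_of_mem (Ioc_mem_nhdsGT_of_mem ⟨le_refl m, hcase⟩) (fun x hx => hx)
      obtain ⟨x, h1, h2⟩ := (hev.and hev2).exists
      exact absurd (key x h2.1 h2.2) (not_le.2 h1)
    have hIms : infIcc f s t ≤ infIcc f m s := by
      refine LooptreeAux.le_infIcc hms (fun x hx => ?_)
      rcases eq_or_lt_of_le hx.1 with h | h
      · exact le_of_le_of_eq hfm (congrArg f h)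
      · exact key x h hx.2
    have hImt : infIcc f m t = infIcc f s t := by
      refine le_antisymm (LooptreeAux.infIcc_mono hf_nonneg hm0 ht1 hms (le_refl t) hst.le) ?_
      refine LooptreeAux.le_infIcc hmt.le (fun x hx => ?_)
      rcases le_or_gt x s with hxs | hxs
      · rcases eq_or_lt_of_le hx.1 with h | h
        · exact le_of_le_of_eq hfm (congrArg f h)
        · exact key x h hxs
      · exact LooptreeAux.infIcc_le hf_nonneg hs0 ht1 ⟨hxs.le, hx.2⟩
    have hcyc : cycleDist (jump f fl m) (xpos f fl m s) (xpos f fl m t)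
        ≤ infIcc f m s - infIcc f s t := by
      refine le_trans (min_le_left _ _) ?_
      rw [show xpos f fl m s - xpos f fl m t = infIcc f m s - infIcc f m t by
        unfold xpos; ring, hImt, abs_of_nonneg (by linarith)]
    have hd0s : dZero f fl m s ≤ fl s - infIcc f m s :=
      LooptreeAux.dZero_le hf_left hf_nonneg hf_jump hm0 hcase hs1
    have hd0t : dZero f fl m t ≤ fl t - infIcc f m t :=
      LooptreeAux.dZero_le hf_left hf_nonneg hf_jump hm0 hmt ht1
    linarith [hImt]
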